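/- Let t ≥ 2 and let G be a finite connected P_t-free graph. Then for all integers k, k' with k > t and k' > t, G has a C_k-coloring if and only if G has a C_{k'}-coloring. -/

import Mathlib

/-- The cycle `C_k` on vertex set `ZMod k`: distinct vertices `u, v` are adjacent
iff `u - v = 1` or `v - u = 1`. -/
def cycleZMod (k : ℕ) : SimpleGraph (ZMod k) where
  Adj u v := u ≠ v ∧ (u - v = 1 ∨ v - u = 1)
  symm := by
    constructor
    intro u v h
    exact ⟨h.1.symm, h.2.symm⟩
  loopless := by
    constructor
    intro u h
    exact h.1 rfl

/-- A graph is `P_t`-free if it has no induced subgraph isomorphic to the path on `t`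
vertices, i.e. there is no graph embedding of the path graph on `t` vertices into it. -/
def PFree {V : Type*} (t : ℕ) (G : SimpleGraph V) : Prop :=
  IsEmpty (SimpleGraph.pathGraph t ↪g G)

namespace StmtAux

variable {V : Type*}

/-- A closed walk of length `n` in `G`, presented as a function `ℕ → V`. -/
def CW (G : SimpleGraph V) (n : ℕ) (p : ℕ → V) : Prop :=
  p 0 = p n ∧ ∀ i < n, G.Adj (p i) (p (i + 1))

/-- Any odd closed walk in the cycle `C_k` has length at least `k`. -/
lemma cycle_length {k n : ℕ} (hk : 3 ≤ k) (hn : Odd n) {p : ℕ → ZMod k}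
    (hp : CW (cycleZMod k) n p) : k ≤ n := by
  haveI : NeZero k := ⟨by omega⟩
  set d : ℕ → ℤ := fun i => if p (i + 1) - p i = 1 then 1 else -1 with hd
  have hd1 : ∀ i, d i = 1 ∨ d i = -1 := by
    intro i
    by_cases h : p (i + 1) - p i = 1 <;> simp [hd, h]
  have hdcast : ∀ i < n, ((d i : ℤ) : ZMod k) = p (i + 1) - p i := by
    intro i hi
    obtain ⟨hne, h1 | h2⟩ := hp.2 i hi
    · by_cases hc : p (i + 1) - p i = 1
      · simp [hd, hc]
      · have hneg : p (i + 1) - p i = -1 := by linear_combination -h1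
        have hdi : d i = -1 := by simp [hd, hc]
        rw [hdi, Int.cast_neg, Int.cast_one, hneg]
    · simp [hd, h2]
  have hsum : ∀ m, m ≤ n → ((∑ i ∈ Finset.range m, d i : ℤ) : ZMod k) = p m - p 0 := by
    intro m
    induction m with
    | zero => simp
    | succ m ih =>
      intro hm
      rw [Finset.sum_range_succ, Int.cast_add, ih (by omega), hdcast m (by omega)]
      ring
  have hS0 : ((∑ i ∈ Finset.range n, d i : ℤ) : ZMod k) = 0 := by
    rw [hsum n le_rfl, ← hp.1, sub_self]
  have hdvd : (k : ℤ) ∣ ∑ i ∈ Finset.range n, d i :=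
    (ZMod.intCast_zmod_eq_zero_iff_dvd _ _).mp hS0
  have hparity : ∀ m, (∑ i ∈ Finset.range m, d i) % 2 = (m : ℤ) % 2 := by
    intro m
    induction m with
    | zero => simp
    | succ m ih =>
      rw [Finset.sum_range_succ]
      rcases hd1 m with h | h <;> push_cast <;> omega
  have habs : ∀ m, |∑ i ∈ Finset.range m, d i| ≤ (m : ℤ) := by
    intro m
    induction m with
    | zero => simp
    | succ m ih =>
      rw [Finset.sum_range_succ]
      calc |(∑ i ∈ Finset.range m, d i) + d m| ≤ |∑ i ∈ Finset.range m, d i| + |d m| :=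
            abs_add_le _ _
        _ ≤ (m : ℤ) + 1 := by
            rcases hd1 m with h | h <;> simp [h] <;> omega
        _ = ((m + 1 : ℕ) : ℤ) := by push_cast; ring
  have hne : (∑ i ∈ Finset.range n, d i) ≠ 0 := by
    have := hparity n
    rw [Nat.odd_iff] at hn
    omega
  have hkle : (k : ℤ) ≤ |∑ i ∈ Finset.range n, d i| :=
    Int.le_of_dvd (abs_pos.mpr hne) ((dvd_abs _ _).mpr hdvd)
  have := habs n
  exact_mod_cast hkle.trans this

variable {G : SimpleGraph V}

/-- Splitting a closed walk at a repeated vertex produces a shorter odd closed walk. -/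
lemma split_eq {n : ℕ} {p : ℕ → V} (hp : CW G n p) (hn : Odd n) {i j : ℕ}
    (hij : i < j) (hj : j ≤ n) (hnot : ¬(i = 0 ∧ j = n)) (heq : p i = p j) :
    ∃ m, Odd m ∧ m < n ∧ ∃ q, CW G m q := by
  have hq1 : CW G (j - i) (fun m => p (i + m)) := by
    constructor
    · show p (i + 0) = p (i + (j - i))
      have h1 : i + 0 = i := by omega
      have h2 : i + (j - i) = j := by omega
      rw [h1, h2]; exact heq
    · intro m hm
      have h2 : i + (m + 1) = (i + m) + 1 := by omega
      show G.Adj (p (i + m)) (p (i + (m + 1)))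
      rw [h2]
      exact hp.2 (i + m) (by omega)
  have hq2 : CW G (n - (j - i)) (fun m => if m ≤ i then p m else p (m + (j - i))) := by
    constructor
    · by_cases hjn : j = n
      · have hend : n - (j - i) = i := by omega
        simp only [hend, Nat.zero_le, if_pos, le_refl]
        rw [hp.1]
        exact (hjn ▸ heq).symm
      · have hend : ¬ (n - (j - i) ≤ i) := by omega
        simp only [Nat.zero_le, if_pos, hend, if_neg, Bool.false_eq_true, not_false_iff]
        rw [hp.1]
        congr 1
        omega
    · intro m hm
      by_cases h1 : m + 1 ≤ i
      · simp only [if_pos (by omega : m ≤ i), if_pos h1]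
        exact hp.2 m (by omega)
      · by_cases h2 : m ≤ i
        · have hmi : m = i := by omega
          have hjln : j < n := by omega
          simp only [if_pos h2, if_neg h1]
          have h4 : p m = p j := by rw [hmi]; exact heq
          have h3 : m + 1 + (j - i) = j + 1 := by omega
          rw [h4, h3]
          exact hp.2 j hjln
        · simp only [if_neg h2, if_neg h1]
          have h3 : m + 1 + (j - i) = (m + (j - i)) + 1 := by omega
          rw [h3]
          exact hp.2 (m + (j - i)) (by omega)
  have hsplit : (j - i) + (n - (j - i)) = n := by omega
  have hlt1 : j - i < n := by omega
  have hlt2 : n - (j - i) < n := by omega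
  simp only [Nat.odd_iff] at hn ⊢
  by_cases ho : (j - i) % 2 = 1
  · exact ⟨j - i, ho, hlt1, _, hq1⟩
  · exact ⟨n - (j - i), by omega, hlt2, _, hq2⟩

/-- Splitting a closed walk along a chord produces a shorter odd closed walk. -/
lemma split_chord {n : ℕ} {p : ℕ → V} (hp : CW G n p) (hn : Odd n) {i j : ℕ}
    (hij : i < j) (hj : j ≤ n) (h2ji : 2 ≤ j - i) (hji2 : j - i ≤ n - 2)
    (hadj : G.Adj (p i) (p j)) :
    ∃ m, Odd m ∧ m < n ∧ ∃ q, CW G m q := by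
  have hq1 : CW G (j - i + 1) (fun m => if m ≤ j - i then p (i + m) else p i) := by
    constructor
    · simp only [Nat.zero_le, if_pos, if_neg (by omega : ¬ (j - i + 1 ≤ j - i))]
      congr 1
    · intro m hm
      by_cases h1 : m + 1 ≤ j - i
      · simp only [if_pos (by omega : m ≤ j - i), if_pos h1]
        have h3 : i + (m + 1) = (i + m) + 1 := by omega
        rw [h3]
        exact hp.2 (i + m) (by omega)
      · have hmv : m = j - i := by omega
        simp only [if_pos (by omega : m ≤ j - i), if_neg h1]
        have h3 : i + m = j := by omega
        rw [h3]
        exact hadj.symm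
  have hq2 : CW G (n - (j - i) + 1)
      (fun m => if m ≤ i then p m else p (m - 1 + (j - i))) := by
    constructor
    · have hb : ¬ (n - (j - i) + 1 ≤ i) := by omega
      simp only [Nat.zero_le, if_pos, if_neg hb]
      rw [hp.1]
      congr 1
      omega
    · intro m hm
      by_cases h1 : m + 1 ≤ i
      · simp only [if_pos (by omega : m ≤ i), if_pos h1]
        exact hp.2 m (by omega)
      · by_cases h2 : m ≤ i
        · have hmi : m = i := by omega
          simp only [if_pos h2, if_neg h1]
          have h3 : m + 1 - 1 + (j - i) = j := by omega
          rw [h3, hmi]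
          exact hadj
        · simp only [if_neg h2, if_neg h1]
          have h3 : m + 1 - 1 + (j - i) = (m - 1 + (j - i)) + 1 := by omega
          rw [h3]
          exact hp.2 (m - 1 + (j - i)) (by omega)
  have hlt1 : j - i + 1 < n := by omega
  have hlt2 : n - (j - i) + 1 < n := by omega
  simp only [Nat.odd_iff] at hn ⊢
  by_cases ho : (j - i + 1) % 2 = 1
  · exact ⟨j - i + 1, ho, hlt1, _, hq1⟩
  · exact ⟨n - (j - i) + 1, by omega, hlt2, _, hq2⟩

/-- Key lemma: a connected `P_t`-free graph admitting a homomorphism to `C_k`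
with `k > t` is properly 2-colorable. -/
lemma key {G : SimpleGraph V} {t k : ℕ} (ht : 2 ≤ t) (hk : t < k)
    (hconn : G.Connected) (hfree : PFree t G) (f : G →g cycleZMod k) :
    ∃ c : V → ZMod 2, ∀ u v, G.Adj u v → c u ≠ c v := by
  have hk3 : 3 ≤ k := by omega
  -- Step 1: G has no odd closed walk.
  classical
  have noodd : ¬ ∃ n, Odd n ∧ ∃ p : ℕ → V, CW G n p := by
    intro hex
    obtain ⟨hodd, p, hp⟩ := Nat.find_spec hex
    set ℓ := Nat.find hex with hℓdef
    have hmin : ∀ m < ℓ, ¬ (Odd m ∧ ∃ q, CW G m q) := fun m hm => Nat.find_min hex hm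
    have hfp : CW (cycleZMod k) ℓ (fun i => f (p i)) :=
      ⟨congrArg f hp.1, fun i hi => f.map_adj (hp.2 i hi)⟩
    have hkℓ : k ≤ ℓ := cycle_length hk3 hodd hfp
    have hinj : ∀ i j, i < j → j ≤ ℓ - 1 → p i ≠ p j := by
      intro i j hij hj heq
      obtain ⟨m, hm1, hm2, q, hq⟩ := split_eq hp hodd hij (by omega) (by omega) heq
      exact hmin m hm2 ⟨hm1, q, hq⟩
    have hadjiff : ∀ i j, i ≤ ℓ - 2 → j ≤ ℓ - 2 →
        (G.Adj (p i) (p j) ↔ (i + 1 = j ∨ j + 1 = i)) := by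
      have main : ∀ i j, i < j → j ≤ ℓ - 2 → G.Adj (p i) (p j) → j = i + 1 := by
        intro i j hij hj hadj
        by_contra hne
        obtain ⟨m, hm1, hm2, q, hq⟩ :=
          split_chord hp hodd hij (by omega) (by omega) (by omega) hadj
        exact hmin m hm2 ⟨hm1, q, hq⟩
      intro i j hi hj
      constructor
      · intro hadj
        rcases lt_trichotomy i j with h | h | h
        · exact Or.inl (main i j h hj hadj).symm
        · exact absurd (h ▸ hadj) (G.irrefl)
        · exact Or.inr (main j i h hi hadj.symm).symm
      · rintro (h | h)
        · rw [← h]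
          exact hp.2 i (by omega)
        · rw [← h]
          exact (hp.2 j (by omega)).symm
    -- build an embedding of pathGraph t
    have hemb : Nonempty (SimpleGraph.pathGraph t ↪g G) := by
      refine ⟨⟨⟨fun i : Fin t => p i.val, ?_⟩, ?_⟩⟩
      · intro a b hab
        by_contra hne
        rcases lt_trichotomy a.val b.val with h | h | h
        · exact hinj a.val b.val h (by omega) hab
        · exact hne (Fin.ext h)
        · exact hinj b.val a.val h (by omega) hab.symm
      · intro a b
        show G.Adj (p a.val) (p b.val) ↔ _
        rw [hadjiff a.val b.val (by omega) (by omega), SimpleGraph.pathGraph_adj]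
    exact hfree.false hemb.some
  -- Step 2: build the 2-coloring from walk-length parities.
  obtain ⟨v0⟩ := hconn.nonempty
  have hwlk : ∀ v, Nonempty (G.Walk v0 v) := fun v => hconn.preconnected v0 v
  classical
  set wlk : (v : V) → G.Walk v0 v := fun v => (hwlk v).some with hwlkdef
  refine ⟨fun v => ((wlk v).length : ZMod 2), ?_⟩
  intro u v huv hc
  set a := (wlk u).length with ha
  set b := (wlk v).length with hb
  have hab : a % 2 = b % 2 := by
    have := (ZMod.natCast_eq_natCast_iff' a b 2).mp hc
    exact this
  refine noodd ⟨a + 1 + b, by rw [Nat.odd_iff]; omega,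
    fun m => if m ≤ a then (wlk u).getVert m else (wlk v).getVert (a + 1 + b - m), ?_, ?_⟩
  · simp only [Nat.zero_le, if_pos, if_neg (by omega : ¬ (a + 1 + b ≤ a))]
    rw [SimpleGraph.Walk.getVert_zero]
    have h0 : a + 1 + b - (a + 1 + b) = 0 := by omega
    rw [h0, SimpleGraph.Walk.getVert_zero]
  · intro m hm
    by_cases h1 : m + 1 ≤ a
    · simp only [if_pos (by omega : m ≤ a), if_pos h1]
      exact SimpleGraph.Walk.adj_getVert_succ _ (by omega)
    · by_cases h2 : m ≤ a
      · have hma : m = a := by omega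
        simp only [if_pos h2, if_neg h1]
        rw [hma]
        have h3 : a + 1 + b - (a + 1) = b := by omega
        rw [h3, ha, hb, SimpleGraph.Walk.getVert_length, SimpleGraph.Walk.getVert_length]
        exact huv
      · simp only [if_neg h2, if_neg h1]
        have h3 : a + 1 + b - m = (a + 1 + b - (m + 1)) + 1 := by omega
        rw [h3]
        exact (SimpleGraph.Walk.adj_getVert_succ _ (by omega : a + 1 + b - (m + 1) < b)).symm

/-- A properly 2-colorable graph maps into any cycle `C_k`, `k ≥ 3`. -/
lemma hom_of_two {G : SimpleGraph V} {k : ℕ} (hk : 3 ≤ k)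
    (c : V → ZMod 2) (hc : ∀ u v, G.Adj u v → c u ≠ c v) :
    Nonempty (G →g cycleZMod k) := by
  haveI : Fact (1 < k) := ⟨by omega⟩
  classical
  refine ⟨⟨fun v => if c v = 0 then (0 : ZMod k) else 1, ?_⟩⟩
  intro u v h
  have hne := hc u v h
  have h2 : ∀ x : ZMod 2, x = 0 ∨ x = 1 := by decide
  have h10 : (1 : ZMod k) ≠ 0 := one_ne_zero
  have hval : ∀ w : V, c w = 1 →
      (if c w = 0 then (0 : ZMod k) else 1) = 1 := by
    intro w hw
    rw [if_neg (by rw [hw]; exact one_ne_zero)]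
  have hval0 : ∀ w : V, c w = 0 →
      (if c w = 0 then (0 : ZMod k) else 1) = 0 := by
    intro w hw
    rw [if_pos hw]
  rcases h2 (c u) with hu | hu <;> rcases h2 (c v) with hv | hv
  · exact absurd (hu.trans hv.symm) hne
  · show (cycleZMod k).Adj (if c u = 0 then (0 : ZMod k) else 1)
      (if c v = 0 then (0 : ZMod k) else 1)
    rw [hval0 u hu, hval v hv]
    exact ⟨h10.symm, Or.inr (by rw [sub_zero])⟩
  · show (cycleZMod k).Adj (if c u = 0 then (0 : ZMod k) else 1)
      (if c v = 0 then (0 : ZMod k) else 1)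
    rw [hval u hu, hval0 v hv]
    exact ⟨h10, Or.inl (by rw [sub_zero])⟩
  · exact absurd (hu.trans hv.symm) hne

end StmtAux

/-- Let `t ≥ 2` and let `G` be a finite connected `P_t`-free graph. Then for all
`k, k' > t`, `G` has a `C_k`-coloring iff it has a `C_{k'}`-coloring. -/
theorem stmt4 {V : Type*} [Fintype V] (t : ℕ) (ht : 2 ≤ t)
    (G : SimpleGraph V) (hconn : G.Connected) (hfree : PFree t G)
    (k k' : ℕ) (hk : t < k) (hk' : t < k') :
    Nonempty (G →g cycleZMod k) ↔ Nonempty (G →g cycleZMod k') := by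
  constructor
  · rintro ⟨f⟩
    obtain ⟨c, hc⟩ := StmtAux.key ht hk hconn hfree f
    exact StmtAux.hom_of_two (by omega) c hc
  · rintro ⟨f⟩
    obtain ⟨c, hc⟩ := StmtAux.key ht hk' hconn hfree f
    exact StmtAux.hom_of_two (by omega) c hc
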